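/- Let F : [a,b] → ℝ be continuous, pointwise Lipschitz at all but countably many points. Then F is AC_*: for every Lebesgue-null set D ⊆ [a,b] and every ε > 0, there exists a positive gauge δ on D such that whenever (([cⱼ,dⱼ],xⱼ))ⱼ is a finite collection of nonoverlapping subintervals of [a,b] with tags xⱼ ∈ D ∩ [cⱼ,dⱼ] and dⱼ - cⱼ < δ(xⱼ), one has Σⱼ |F(dⱼ) - F(cⱼ)| < ε. -/

import Mathlib

def PointwiseLipschitzAt (a b : ℝ) (F : ℝ → ℝ) (x : ℝ) : Prop :=
  ∃ K : ℝ, ∃ r > 0, ∀ y ∈ Set.Icc a b, |y - x| < r → |F y - F x| ≤ K * |y - x|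

def IsTaggedFamily (a b : ℝ) (p : ℕ) (c d x : ℕ → ℝ) : Prop :=
  (∀ j < p, a ≤ c j ∧ c j < d j ∧ d j ≤ b) ∧
    (∀ j, j + 1 < p → d j ≤ c (j + 1)) ∧
    ∀ j < p, x j ∈ Set.Icc (c j) (d j)

private lemma aux_chain (p : ℕ) (c d : ℕ → ℝ) (h1 : ∀ j < p, c j < d j)
    (h2 : ∀ j, j + 1 < p → d j ≤ c (j + 1)) :
    ∀ j k, j < k → k < p → d j ≤ c k := by
  intro j k
  induction k with
  | zero => omega
  | succ k ih =>
    intro hjk hk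
    rcases Nat.lt_succ_iff_lt_or_eq.mp hjk with h | h
    · exact le_trans (le_trans (ih h (by omega)) (le_of_lt (h1 k (by omega)))) (h2 k hk)
    · subst h; exact h2 j hk

/-- A continuous function on `[a,b]` which is pointwise Lipschitz at all but countably
many points is `AC_*`: on every Lebesgue-null set `D` and `ε > 0` there is a positive
gauge `δ` on `D` such that every `δ`-fine finite nonoverlapping family of subintervals
tagged in `D` has total `F`-variation `< ε`. -/
theorem pointwiseLipschitz_ACstar (a b : ℝ) (hab : a ≤ b) (F : ℝ → ℝ)
    (hF : ContinuousOn F (Set.Icc a b)) (E : Set ℝ) (hE : E.Countable)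
    (hLip : ∀ x ∈ Set.Icc a b \ E, PointwiseLipschitzAt a b F x) :
    ∀ D ⊆ Set.Icc a b, MeasureTheory.volume D = 0 → ∀ ε > 0,
      ∃ δ : ℝ → ℝ, (∀ y ∈ D, 0 < δ y) ∧
        ∀ (p : ℕ) (c d x : ℕ → ℝ), IsTaggedFamily a b p c d x →
          (∀ j < p, x j ∈ D) → (∀ j < p, d j - c j < δ (x j)) →
          ∑ j ∈ Finset.range p, |F (d j) - F (c j)| < ε := by
  classical
  intro D hD hDnull ε hε
  -- an injection of the countable part into ℕ
  have hDE : (D ∩ E).Countable := hE.mono Set.inter_subset_right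
  have : Countable (D ∩ E : Set ℝ) := hDE.to_subtype
  obtain ⟨f0, hf0⟩ := exists_injective_nat (D ∩ E : Set ℝ)
  set f : ℝ → ℕ := fun z => if h : z ∈ D ∩ E then f0 ⟨z, h⟩ else 0 with hf
  have hfinj : ∀ z ∈ D ∩ E, ∀ w ∈ D ∩ E, f z = f w → z = w := by
    intro z hz w hw hzw
    simp only [hf, dif_pos hz, dif_pos hw] at hzw
    exact Subtype.ext_iff.mp (hf0 hzw)
  -- budgets
  set εC : ℕ → ℝ := fun n => ε / 2 ^ (n + 5) with hεC
  set εL : ℕ → ℝ := fun k => ε / (2 ^ (k + 5) * (k + 1)) with hεL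
  have hεCpos : ∀ n, 0 < εC n := fun n => by rw [hεC]; positivity
  have hεLpos : ∀ k, 0 < εL k := fun k => by rw [hεL]; positivity
  -- natural Lipschitz constants and radii
  have hm' : ∀ z : ℝ, ∃ (mz : ℕ) (rz : ℝ), 0 < rz ∧
      (z ∈ D \ E → ∀ y ∈ Set.Icc a b, |y - z| < rz → |F y - F z| ≤ (mz : ℝ) * |y - z|) := by
    intro z
    by_cases hz : z ∈ D \ E
    · obtain ⟨K, rz, hrz, hK⟩ := hLip z ⟨hD hz.1, hz.2⟩
      obtain ⟨mz, hmz⟩ := exists_nat_ge K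
      exact ⟨mz, rz, hrz, fun _ y hy hyr => (hK y hy hyr).trans
        (mul_le_mul_of_nonneg_right hmz (abs_nonneg _))⟩
    · exact ⟨0, 1, one_pos, fun h => absurd h hz⟩
  choose m r hr hmr using hm'
  -- small open neighbourhoods of the null set D
  have hU : ∀ k : ℕ, ∃ U : Set ℝ, D ⊆ U ∧ IsOpen U ∧
      MeasureTheory.volume U < ENNReal.ofReal (εL k) := by
    intro k
    obtain ⟨U, hU1, hU2, hU3⟩ := Set.exists_isOpen_lt_of_lt D (ENNReal.ofReal (εL k))
      (by rw [hDnull]; exact ENNReal.ofReal_pos.mpr (hεLpos k))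
    exact ⟨U, hU1, hU2, hU3⟩
  choose U hUD hUopen hUvol using hU
  -- radii into the open sets
  have hρ' : ∀ z : ℝ, ∃ ρz : ℝ, 0 < ρz ∧ (z ∈ D → Metric.ball z ρz ⊆ U (m z)) := by
    intro z
    by_cases hz : z ∈ D
    · obtain ⟨ρz, hρz, hb⟩ := Metric.isOpen_iff.mp (hUopen (m z)) z (hUD (m z) hz)
      exact ⟨ρz, hρz, fun _ => hb⟩
    · exact ⟨1, one_pos, fun h => absurd h hz⟩
  choose ρ hρ hρsub using hρ'
  -- continuity radii on the countable part
  have ht' : ∀ z : ℝ, ∃ tz : ℝ, 0 < tz ∧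
      (z ∈ D ∩ E → ∀ y ∈ Set.Icc a b, |y - z| < tz → |F y - F z| < εC (f z)) := by
    intro z
    by_cases hz : z ∈ D ∩ E
    · have hza : z ∈ Set.Icc a b := hD hz.1
      have hc := hF z hza
      rw [Metric.continuousWithinAt_iff] at hc
      obtain ⟨tz, htz, htp⟩ := hc (εC (f z)) (hεCpos _)
      refine ⟨tz, htz, fun _ y hy hyt => ?_⟩
      have := htp hy (by rwa [Real.dist_eq])
      rwa [Real.dist_eq] at this
    · exact ⟨1, one_pos, fun h => absurd h hz⟩
  choose t ht htp using ht'
  refine ⟨fun z => min (min (r z) (ρ z)) (t z),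
    fun y _ => lt_min (lt_min (hr y) (hρ y)) (ht y), ?_⟩
  intro p c d x htf htag hfine
  obtain ⟨hcd, hsep, hmem⟩ := htf
  have hchain : ∀ j k, j < k → k < p → d j ≤ c k :=
    aux_chain p c d (fun j hj => (hcd j hj).2.1) hsep
  have hcab : ∀ j < p, c j ∈ Set.Icc a b := fun j hj =>
    ⟨(hcd j hj).1, le_trans (le_of_lt (hcd j hj).2.1) (hcd j hj).2.2⟩
  have hdab : ∀ j < p, d j ∈ Set.Icc a b := fun j hj =>
    ⟨le_trans (hcd j hj).1 (le_of_lt (hcd j hj).2.1), (hcd j hj).2.2⟩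
  -- fineness consequences
  have hfine_t : ∀ j < p, ∀ y ∈ Set.Icc (c j) (d j), |y - x j| < t (x j) := by
    intro j hj y hy
    have h1 := (hmem j hj).1; have h2 := (hmem j hj).2
    have : |y - x j| ≤ d j - c j := abs_le.mpr ⟨by linarith [hy.1, hy.2], by linarith [hy.1, hy.2]⟩
    calc |y - x j| ≤ d j - c j := this
      _ < min (min (r (x j)) (ρ (x j))) (t (x j)) := hfine j hj
      _ ≤ t (x j) := min_le_right _ _
  have hfine_r : ∀ j < p, ∀ y ∈ Set.Icc (c j) (d j), |y - x j| < r (x j) := by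
    intro j hj y hy
    have h1 := (hmem j hj).1; have h2 := (hmem j hj).2
    have : |y - x j| ≤ d j - c j := abs_le.mpr ⟨by linarith [hy.1, hy.2], by linarith [hy.1, hy.2]⟩
    calc |y - x j| ≤ d j - c j := this
      _ < min (min (r (x j)) (ρ (x j))) (t (x j)) := hfine j hj
      _ ≤ r (x j) := le_trans (min_le_left _ _) (min_le_left _ _)
  have hsubU : ∀ j < p, Set.Ioo (c j) (d j) ⊆ U (m (x j)) := by
    intro j hj y hy
    apply hρsub (x j) (htag j hj)
    rw [Metric.mem_ball, Real.dist_eq]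
    have h1 := (hmem j hj).1; have h2 := (hmem j hj).2
    have hle : |y - x j| ≤ d j - c j :=
      abs_le.mpr ⟨by linarith [hy.1, hy.2], by linarith [hy.1, hy.2]⟩
    calc |y - x j| ≤ d j - c j := hle
      _ < min (min (r (x j)) (ρ (x j))) (t (x j)) := hfine j hj
      _ ≤ ρ (x j) := le_trans (min_le_left _ _) (min_le_right _ _)
  -- per-interval bounds
  have hboundA : ∀ j < p, x j ∈ E → |F (d j) - F (c j)| ≤ 2 * εC (f (x j)) := by
    intro j hj hxE
    have hxDE : x j ∈ D ∩ E := ⟨htag j hj, hxE⟩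
    have h1 : |F (d j) - F (x j)| < εC (f (x j)) :=
      htp (x j) hxDE (d j) (hdab j hj)
        (hfine_t j hj (d j) ⟨le_of_lt (hcd j hj).2.1, le_refl _⟩)
    have h2 : |F (c j) - F (x j)| < εC (f (x j)) :=
      htp (x j) hxDE (c j) (hcab j hj)
        (hfine_t j hj (c j) ⟨le_refl _, le_of_lt (hcd j hj).2.1⟩)
    have h3 : |F (d j) - F (c j)| ≤ |F (d j) - F (x j)| + |F (x j) - F (c j)| :=
      abs_sub_le _ _ _
    rw [abs_sub_comm (F (x j)) (F (c j))] at h3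
    linarith
  have hboundB : ∀ j < p, x j ∉ E → |F (d j) - F (c j)| ≤ (m (x j) : ℝ) * (d j - c j) := by
    intro j hj hxE
    have hxDE : x j ∈ D \ E := ⟨htag j hj, hxE⟩
    have h1 : |F (d j) - F (x j)| ≤ (m (x j) : ℝ) * |d j - x j| :=
      hmr (x j) hxDE (d j) (hdab j hj)
        (hfine_r j hj (d j) ⟨le_of_lt (hcd j hj).2.1, le_refl _⟩)
    have h2 : |F (c j) - F (x j)| ≤ (m (x j) : ℝ) * |c j - x j| :=
      hmr (x j) hxDE (c j) (hcab j hj)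
        (hfine_r j hj (c j) ⟨le_refl _, le_of_lt (hcd j hj).2.1⟩)
    have hx1 := (hmem j hj).1; have hx2 := (hmem j hj).2
    rw [abs_of_nonneg (by linarith : (0:ℝ) ≤ d j - x j)] at h1
    rw [abs_of_nonpos (by linarith : c j - x j ≤ 0)] at h2
    have h3 : |F (d j) - F (c j)| ≤ |F (d j) - F (x j)| + |F (x j) - F (c j)| :=
      abs_sub_le _ _ _
    rw [abs_sub_comm (F (x j)) (F (c j))] at h3
    have hm0 : (0:ℝ) ≤ (m (x j) : ℝ) := Nat.cast_nonneg _
    nlinarith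
  set term : ℕ → ℝ := fun j => |F (d j) - F (c j)| with hterm
  have htermnn : ∀ j, 0 ≤ term j := fun j => abs_nonneg _
  set A : Finset ℕ := (Finset.range p).filter (fun j => x j ∈ E) with hA
  set B : Finset ℕ := (Finset.range p).filter (fun j => ¬ x j ∈ E) with hB
  have hsplit : ∑ j ∈ A, term j + ∑ j ∈ B, term j = ∑ j ∈ Finset.range p, term j :=
    Finset.sum_filter_add_sum_filter_not _ _ _
  -- Part A : countable tags
  have hApart : ∑ j ∈ A, term j ≤ ε / 4 := by
    have hmaps : ∀ j ∈ A, f (x j) ∈ A.image (fun j => f (x j)) :=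
      fun j hj => Finset.mem_image_of_mem _ hj
    rw [← Finset.sum_fiberwise_of_maps_to hmaps term]
    have hinner : ∀ n ∈ A.image (fun j => f (x j)),
        ∑ j ∈ A.filter (fun j => f (x j) = n), term j ≤ ε / 8 * (1 / 2) ^ n := by
      intro n hn
      set G := A.filter (fun j => f (x j) = n) with hG
      have hGsub : ∀ j ∈ G, j < p ∧ x j ∈ D ∩ E ∧ f (x j) = n := by
        intro j hj
        rw [hG, Finset.mem_filter, hA, Finset.mem_filter, Finset.mem_range] at hj
        exact ⟨hj.1.1, ⟨htag j hj.1.1, hj.1.2⟩, hj.2⟩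
      have hGbound : ∀ j ∈ G, term j ≤ 2 * εC n := by
        intro j hj
        obtain ⟨hjp, hjDE, hjn⟩ := hGsub j hj
        have := hboundA j hjp hjDE.2
        rwa [hjn] at this
      have hGcard : G.card ≤ 2 := by
        by_cases hGne : G.Nonempty
        · set j₀ := G.min' hGne with hj₀
          set k₀ := G.max' hGne with hk₀
          have hsub : G ⊆ {j₀, k₀} := by
            intro j hj
            rcases eq_or_ne j j₀ with h | h
            · simp [h]
            rcases eq_or_ne j k₀ with h' | h'
            · simp [h']
            exfalso
            have hlt1 : j₀ < j := lt_of_le_of_ne (G.min'_le j hj) (Ne.symm h)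
            have hlt2 : j < k₀ := lt_of_le_of_ne (G.le_max' j hj) h'
            obtain ⟨hjp, hjDE, hjn⟩ := hGsub j hj
            obtain ⟨hjp0, hjDE0, hjn0⟩ := hGsub j₀ (G.min'_mem hGne)
            obtain ⟨hjpk, hjDEk, hjnk⟩ := hGsub k₀ (G.max'_mem hGne)
            have he1 : x j₀ = x j := hfinj _ hjDE0 _ hjDE (by rw [hjn0, hjn])
            have he2 : x j = x k₀ := hfinj _ hjDE _ hjDEk (by rw [hjn, hjnk])
            have hc1 : d j₀ ≤ c j := hchain j₀ j hlt1 hjp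
            have hc2 : d j ≤ c k₀ := hchain j k₀ hlt2 hjpk
            have hcj : c j < d j := (hcd j hjp).2.1
            have hx0 := (hmem j₀ hjp0).2
            have hxk := (hmem k₀ hjpk).1
            rw [he1, he2] at hx0
            linarith
          calc G.card ≤ ({j₀, k₀} : Finset ℕ).card := Finset.card_le_card hsub
            _ ≤ 2 := le_trans (Finset.card_insert_le _ _) (by simp)
        · simp [Finset.not_nonempty_iff_eq_empty.mp hGne]
      have := Finset.sum_le_card_nsmul G term (2 * εC n) hGbound
      have h2 : G.card • (2 * εC n) ≤ 2 • (2 * εC n) :=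
        nsmul_le_nsmul_left (by positivity) hGcard
      have h3 : (2 : ℕ) • (2 * εC n) = ε / 8 * (1 / 2) ^ n := by
        rw [nsmul_eq_mul]
        simp only [hεC]
        push_cast
        rw [pow_add]
        field_simp
        ring_nf; rw [← mul_pow]; norm_num
      calc ∑ j ∈ G, term j ≤ G.card • (2 * εC n) := this
        _ ≤ 2 • (2 * εC n) := h2
        _ = ε / 8 * (1 / 2) ^ n := h3
    calc ∑ n ∈ A.image (fun j => f (x j)), ∑ j ∈ A.filter (fun j => f (x j) = n), term j
        ≤ ∑ n ∈ A.image (fun j => f (x j)), ε / 8 * (1 / 2) ^ n :=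
          Finset.sum_le_sum hinner
      _ = ε / 8 * ∑ n ∈ A.image (fun j => f (x j)), (1 / 2 : ℝ) ^ n := by
          rw [Finset.mul_sum]
      _ ≤ ε / 8 * 2 := by
          apply mul_le_mul_of_nonneg_left _ (by positivity)
          have hs : Summable (fun n : ℕ => (1 / 2 : ℝ) ^ n) :=
            summable_geometric_of_lt_one (by norm_num) (by norm_num)
          have := Summable.sum_le_tsum (A.image (fun j => f (x j)))
            (fun i _ => by positivity) hs
          rw [tsum_geometric_of_lt_one (by norm_num) (by norm_num)] at this
          norm_num at this ⊢
          linarith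
      _ = ε / 4 := by ring
  -- Part B : Lipschitz tags
  have hBpart : ∑ j ∈ B, term j ≤ ε / 16 := by
    have hmaps : ∀ j ∈ B, m (x j) ∈ B.image (fun j => m (x j)) :=
      fun j hj => Finset.mem_image_of_mem _ hj
    rw [← Finset.sum_fiberwise_of_maps_to hmaps term]
    have hinner : ∀ k ∈ B.image (fun j => m (x j)),
        ∑ j ∈ B.filter (fun j => m (x j) = k), term j ≤ ε / 32 * (1 / 2) ^ k := by
      intro k hk
      set G := B.filter (fun j => m (x j) = k) with hG
      have hGsub : ∀ j ∈ G, j < p ∧ x j ∉ E ∧ m (x j) = k := by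
        intro j hj
        rw [hG, Finset.mem_filter, hB, Finset.mem_filter, Finset.mem_range] at hj
        exact ⟨hj.1.1, hj.1.2, hj.2⟩
      -- total length bound via the measure of U k
      have hdisj : (↑G : Set ℕ).PairwiseDisjoint (fun j => Set.Ioo (c j) (d j)) := by
        intro i hi j hj hij
        have hip : i < p := (hGsub i (Finset.mem_coe.mp hi)).1
        have hjp : j < p := (hGsub j (Finset.mem_coe.mp hj)).1
        rcases lt_or_gt_of_ne hij with h | h
        · have := hchain i j h hjp
          apply Set.disjoint_left.mpr
          intro y hy1 hy2
          exact absurd (lt_of_lt_of_le hy1.2 (le_trans this (le_of_lt hy2.1))) (lt_irrefl y)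
        · have := hchain j i h hip
          apply Set.disjoint_left.mpr
          intro y hy1 hy2
          exact absurd (lt_of_lt_of_le hy2.2 (le_trans this (le_of_lt hy1.1))) (lt_irrefl y)
      have hlen : ∑ j ∈ G, (d j - c j) ≤ εL k := by
        have hnn : ∀ j ∈ G, (0:ℝ) ≤ d j - c j := by
          intro j hj
          have := (hcd j (hGsub j hj).1).2.1
          linarith
        have heq : ENNReal.ofReal (∑ j ∈ G, (d j - c j)) =
            MeasureTheory.volume (⋃ j ∈ G, Set.Ioo (c j) (d j)) := by
          rw [ENNReal.ofReal_sum_of_nonneg hnn,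
            MeasureTheory.measure_biUnion_finset hdisj (fun _ _ => measurableSet_Ioo)]
          exact Finset.sum_congr rfl fun j _ => (Real.volume_Ioo).symm
        have hle : MeasureTheory.volume (⋃ j ∈ G, Set.Ioo (c j) (d j)) ≤
            MeasureTheory.volume (U k) := by
          apply MeasureTheory.measure_mono
          apply Set.iUnion₂_subset
          intro j hj
          obtain ⟨hjp, _, hjk⟩ := hGsub j hj
          have := hsubU j hjp
          rwa [hjk] at this
        have : ENNReal.ofReal (∑ j ∈ G, (d j - c j)) < ENNReal.ofReal (εL k) :=
          lt_of_le_of_lt (heq ▸ hle) (hUvol k)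
        exact le_of_lt ((ENNReal.ofReal_lt_ofReal_iff (hεLpos k)).mp this)
      have hGbound : ∀ j ∈ G, term j ≤ (k : ℝ) * (d j - c j) := by
        intro j hj
        obtain ⟨hjp, hjE, hjk⟩ := hGsub j hj
        have := hboundB j hjp hjE
        rwa [hjk] at this
      have hstep : ∑ j ∈ G, term j ≤ (k : ℝ) * εL k := by
        calc ∑ j ∈ G, term j ≤ ∑ j ∈ G, (k : ℝ) * (d j - c j) :=
              Finset.sum_le_sum hGbound
          _ = (k : ℝ) * ∑ j ∈ G, (d j - c j) := by rw [Finset.mul_sum]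
          _ ≤ (k : ℝ) * εL k := mul_le_mul_of_nonneg_left hlen (Nat.cast_nonneg _)
      have hfinal : (k : ℝ) * εL k ≤ ε / 32 * (1 / 2) ^ k := by
        have h1 : (k : ℝ) * εL k ≤ ((k : ℝ) + 1) * εL k :=
          mul_le_mul_of_nonneg_right (by linarith) (le_of_lt (hεLpos k))
        have h2 : ((k : ℝ) + 1) * εL k = ε / 32 * (1 / 2) ^ k := by
          simp only [hεL]
          have hne : ((k:ℝ) + 1) ≠ 0 := by positivity
          rw [pow_add]
          field_simp
          ring_nf; rw [← mul_pow]; norm_num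
        linarith
      linarith
    calc ∑ k ∈ B.image (fun j => m (x j)), ∑ j ∈ B.filter (fun j => m (x j) = k), term j
        ≤ ∑ k ∈ B.image (fun j => m (x j)), ε / 32 * (1 / 2) ^ k :=
          Finset.sum_le_sum hinner
      _ = ε / 32 * ∑ k ∈ B.image (fun j => m (x j)), (1 / 2 : ℝ) ^ k := by
          rw [Finset.mul_sum]
      _ ≤ ε / 32 * 2 := by
          apply mul_le_mul_of_nonneg_left _ (by positivity)
          have hs : Summable (fun n : ℕ => (1 / 2 : ℝ) ^ n) :=
            summable_geometric_of_lt_one (by norm_num) (by norm_num)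
          have := Summable.sum_le_tsum (B.image (fun j => m (x j)))
            (fun i _ => by positivity) hs
          rw [tsum_geometric_of_lt_one (by norm_num) (by norm_num)] at this
          norm_num at this ⊢
          linarith
      _ = ε / 16 := by ring
  have : ∑ j ∈ Finset.range p, term j ≤ ε / 4 + ε / 16 := by
    rw [← hsplit]; linarith
  calc ∑ j ∈ Finset.range p, |F (d j) - F (c j)| = ∑ j ∈ Finset.range p, term j := rfl
    _ ≤ ε / 4 + ε / 16 := this
    _ < ε := by linarith
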